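/- Let A be a packing bound function and n ≥ 1. The sequence k ↦ A(2^k·[0,1]^n)/2^{kn} is weakly decreasing, is bounded below by 2^{-n} for k ≥ 1 (indeed A(2^k·[0,1]^n) ≥ (1 + 2^{k-1})^n for k ≥ 1), and therefore converges as k → ∞ to a positive limit δ_{A,n} ≥ 2^{-n}. -/

import Mathlib

open scoped Pointwise
open MeasureTheory Bornology Filter

/-- The unit cube `[0,1]^n` in `ℝ^n`. -/
def unitCube (n : ℕ) : Set (EuclideanSpace ℝ (Fin n)) :=
  {x | ∀ i, x i ∈ Set.Icc (0 : ℝ) 1}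

/-- A packing bound function: an assignment of a nonnegative real number to every bounded
Borel subset of every Euclidean space, satisfying the sphere bound, Lipschitz, union,
and mesh axioms. -/
structure PackingBoundFunction where
  toFun : ∀ d : ℕ, Set (EuclideanSpace ℝ (Fin d)) → ℝ
  nonneg : ∀ (d : ℕ) (C : Set (EuclideanSpace ℝ (Fin d))),
    IsBounded C → MeasurableSet C → 0 ≤ toFun d C
  sphere_bound : ∀ (d : ℕ) (C : Set (EuclideanSpace ℝ (Fin d))),
    IsBounded C → MeasurableSet C → C.Nonempty →
    (∃ z, C ⊆ Metric.ball z 1) → toFun d C = 1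
  lipschitz : ∀ (d d' : ℕ) (C : Set (EuclideanSpace ℝ (Fin d)))
    (C' : Set (EuclideanSpace ℝ (Fin d'))),
    IsBounded C → MeasurableSet C → IsBounded C' → MeasurableSet C' →
    (∃ ψ : EuclideanSpace ℝ (Fin d) → EuclideanSpace ℝ (Fin d'),
      (∀ x ∈ C, ψ x ∈ C') ∧ ∀ x ∈ C, ∀ y ∈ C, dist x y ≤ dist (ψ x) (ψ y)) →
    toFun d C ≤ toFun d' C'
  union : ∀ (d : ℕ) (C C' : Set (EuclideanSpace ℝ (Fin d))),
    IsBounded C → MeasurableSet C → IsBounded C' → MeasurableSet C' →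
    (∀ x ∈ C, ∀ x' ∈ C', 2 ≤ dist x x') →
    toFun d (C ∪ C') = toFun d C + toFun d C'
  mesh : ∀ (ε : ℝ), 0 < ε → ∀ (d : ℕ) (C C' : Set (EuclideanSpace ℝ (Fin d))),
    IsBounded C → MeasurableSet C → IsBounded C' → MeasurableSet C' →
    C ⊆ Metric.thickening ε C' →
    toFun d ((1 / (1 + ε)) • C) ≤ toFun d C'

/-- The Euclidean limit `δ_{A,n}` of a packing bound function: the limit of
`A(2^k·[0,1]^n)/2^{kn}` as `k → ∞` (expressed as a `limsup`, which coincides with the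
limit since the latter exists). -/
noncomputable def pbfDensity (A : PackingBoundFunction) (n : ℕ) : ℝ :=
  Filter.limsup (fun k : ℕ => A.toFun n ((2 : ℝ) ^ k • unitCube n) / 2 ^ (k * n)) Filter.atTop

namespace PBFAux

abbrev E (n : ℕ) := EuclideanSpace ℝ (Fin n)

def toE (n : ℕ) (f : Fin n → ℝ) : E n := WithLp.toLp 2 f

@[simp] lemma toE_apply (n : ℕ) (f : Fin n → ℝ) (i : Fin n) : toE n f i = f i := rfl

def box (n : ℕ) (a : Fin n → ℝ) (r : ℝ) : Set (E n) :=
  {x | ∀ i, x i ∈ Set.Icc (a i) (a i + r)}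

variable {n : ℕ}

lemma dist_eq_sqrt (x y : E n) : dist x y = Real.sqrt (∑ i, (x i - y i) ^ 2) := by
  rw [EuclideanSpace.dist_eq]
  congr 1
  refine Finset.sum_congr rfl fun i _ => ?_
  rw [Real.dist_eq, sq_abs]

lemma dist_le_dist_of_sq (x y x' y' : E n)
    (h : ∀ i, (x i - y i) ^ 2 ≤ (x' i - y' i) ^ 2) : dist x y ≤ dist x' y' := by
  rw [dist_eq_sqrt, dist_eq_sqrt]
  exact Real.sqrt_le_sqrt (Finset.sum_le_sum fun i _ => h i)

lemma two_le_dist (x y : E n) (i : Fin n) (h : 4 ≤ (x i - y i) ^ 2) : 2 ≤ dist x y := by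
  rw [dist_eq_sqrt]
  have h4 : (4 : ℝ) ≤ ∑ j, (x j - y j) ^ 2 :=
    le_trans h (Finset.single_le_sum (f := fun j => (x j - y j) ^ 2)
      (fun j _ => sq_nonneg _) (Finset.mem_univ i))
  have hs : Real.sqrt 4 ≤ Real.sqrt (∑ j, (x j - y j) ^ 2) := Real.sqrt_le_sqrt h4
  rwa [show (4:ℝ) = 2 ^ 2 by norm_num, Real.sqrt_sq (by norm_num : (0:ℝ) ≤ 2)] at hs

lemma isClosed_box (a : Fin n → ℝ) (r : ℝ) : IsClosed (box n a r) := by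
  have h : box n a r = ⋂ i, (EuclideanSpace.proj (𝕜 := ℝ) i) ⁻¹' Set.Icc (a i) (a i + r) := by
    ext x; simp [box]
  rw [h]
  exact isClosed_iInter fun i => isClosed_Icc.preimage (EuclideanSpace.proj i).continuous

lemma measurableSet_box (a : Fin n → ℝ) (r : ℝ) : MeasurableSet (box n a r) :=
  (isClosed_box a r).measurableSet

lemma isBounded_box (a : Fin n → ℝ) (r : ℝ) : IsBounded (box n a r) := by
  rw [Metric.isBounded_iff]
  refine ⟨Real.sqrt (n * r ^ 2), fun x hx y hy => ?_⟩
  rw [dist_eq_sqrt]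
  apply Real.sqrt_le_sqrt
  have h : ∀ i, (x i - y i) ^ 2 ≤ r ^ 2 := by
    intro i
    have h1 := hx i; have h2 := hy i
    simp only [Set.mem_Icc] at h1 h2
    nlinarith [h1.1, h1.2, h2.1, h2.2]
  calc ∑ i, (x i - y i) ^ 2 ≤ ∑ _i : Fin n, r ^ 2 := Finset.sum_le_sum fun i _ => h i
    _ = n * r ^ 2 := by simp [Finset.sum_const, Finset.card_univ]

lemma smul_unitCube (r : ℝ) (hr : 0 < r) :
    r • unitCube n = box n (fun _ => 0) r := by
  ext x
  rw [Set.mem_smul_set_iff_inv_smul_mem₀ hr.ne']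
  simp only [unitCube, box, Set.mem_setOf_eq, Set.mem_Icc, PiLp.smul_apply, smul_eq_mul,
    zero_add]
  have hinv : (0:ℝ) < r⁻¹ := inv_pos.mpr hr
  have hc : r⁻¹ * r = 1 := inv_mul_cancel₀ hr.ne'
  refine forall_congr' fun i => ?_
  constructor
  · rintro ⟨h1, h2⟩
    constructor <;> nlinarith
  · rintro ⟨h1, h2⟩
    constructor <;> nlinarith

variable (A : PackingBoundFunction)

lemma A_empty : A.toFun n ∅ = 0 := by
  have h := A.union n ∅ ∅ Bornology.isBounded_empty MeasurableSet.empty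
    Bornology.isBounded_empty MeasurableSet.empty (by simp)
  simp only [Set.union_empty] at h
  linarith

lemma A_singleton (p : E n) : A.toFun n {p} = 1 :=
  A.sphere_bound n {p} Bornology.isBounded_singleton (measurableSet_singleton p)
    ⟨p, rfl⟩ ⟨p, Set.singleton_subset_iff.mpr (Metric.mem_ball_self one_pos)⟩

lemma A_mono (C C' : Set (E n)) (hCb : IsBounded C) (hCm : MeasurableSet C)
    (hC'b : IsBounded C') (hC'm : MeasurableSet C') (h : C ⊆ C') :
    A.toFun n C ≤ A.toFun n C' :=
  A.lipschitz n n C C' hCb hCm hC'b hC'm ⟨id, fun _ hx => h hx, fun _ _ _ _ => le_rfl⟩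

lemma A_biUnion {ι : Type*} [DecidableEq ι] (s : Finset ι) (D : ι → Set (E n))
    (hb : ∀ i, IsBounded (D i)) (hm : ∀ i, MeasurableSet (D i))
    (hsep : ∀ i ∈ s, ∀ j ∈ s, i ≠ j → ∀ x ∈ D i, ∀ y ∈ D j, 2 ≤ dist x y) :
    A.toFun n (⋃ i ∈ s, D i) = ∑ i ∈ s, A.toFun n (D i) := by
  classical
  induction s using Finset.induction_on with
  | empty => simp [A_empty]
  | @insert a s ha ih =>
    rw [Finset.set_biUnion_insert, Finset.sum_insert ha]
    have hub : IsBounded (⋃ i ∈ s, D i) :=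
      (Bornology.isBounded_biUnion s.finite_toSet).2 fun i _ => hb i
    have hum : MeasurableSet (⋃ i ∈ s, D i) :=
      MeasurableSet.biUnion s.countable_toSet fun i _ => hm i
    rw [A.union n (D a) (⋃ i ∈ s, D i) (hb a) (hm a) hub hum ?_, ih ?_]
    · intro i hi j hj hij
      exact hsep i (Finset.mem_insert_of_mem hi) j (Finset.mem_insert_of_mem hj) hij
    · intro x hx y hy
      simp only [Set.mem_iUnion] at hy
      obtain ⟨j, hj, hyj⟩ := hy
      exact hsep a (Finset.mem_insert_self a s) j (Finset.mem_insert_of_mem hj)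
        (fun h => ha (h ▸ hj)) x hx y hyj

lemma A_box_translate (a : Fin n → ℝ) (r : ℝ) :
    A.toFun n (box n a r) = A.toFun n (box n (fun _ => 0) r) := by
  have key : ∀ b c : Fin n → ℝ, A.toFun n (box n b r) ≤ A.toFun n (box n c r) := by
    intro b c
    refine A.lipschitz n n _ _ (isBounded_box _ _) (measurableSet_box _ _)
      (isBounded_box _ _) (measurableSet_box _ _)
      ⟨fun x => x + toE n (fun i => c i - b i), ?_, ?_⟩
    · intro x hx i
      have hxi := hx i
      simp only [Set.mem_Icc] at hxi ⊢
      have happ : (x + toE n fun j => c j - b j) i = x i + (c i - b i) := rfl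
      rw [happ]
      constructor <;> linarith [hxi.1, hxi.2]
    · intro x _ y _
      rw [dist_add_right]
  exact le_antisymm (key a fun _ => 0) (key (fun _ => 0) a)

lemma A_double (L : ℝ) (hL : 0 ≤ L) :
    A.toFun n (box n (fun _ => 0) (2 * L)) ≤ 2 ^ n * A.toFun n (box n (fun _ => 0) L) := by
  classical
  set t : (Fin n → Bool) → Fin n → ℝ := fun v i => if v i then L + 2 else 0 with ht
  have hub : IsBounded (⋃ v ∈ (Finset.univ : Finset (Fin n → Bool)), box n (t v) L) :=
    (Bornology.isBounded_biUnion (Finset.univ).finite_toSet).2 fun v _ => isBounded_box _ _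
  have hum : MeasurableSet (⋃ v ∈ (Finset.univ : Finset (Fin n → Bool)), box n (t v) L) :=
    MeasurableSet.biUnion (Finset.univ).countable_toSet fun v _ => measurableSet_box _ _
  have hsum : A.toFun n (⋃ v ∈ (Finset.univ : Finset (Fin n → Bool)), box n (t v) L)
      = ∑ v : Fin n → Bool, A.toFun n (box n (t v) L) := by
    refine A_biUnion A Finset.univ _ (fun _ => isBounded_box _ _)
      (fun _ => measurableSet_box _ _) ?_
    intro v _ w _ hvw x hx y hy
    obtain ⟨i, hi⟩ : ∃ i, v i ≠ w i := by
      by_contra h; push_neg at h; exact hvw (funext h)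
    apply two_le_dist x y i
    have h1 := hx i; have h2 := hy i
    simp only [Set.mem_Icc] at h1 h2
    cases hvb : v i <;> cases hwb : w i
    · exact absurd (hvb.trans hwb.symm) hi
    · have e1 : t v i = 0 := by simp [ht, hvb]
      have e2 : t w i = L + 2 := by simp [ht, hwb]
      rw [e1] at h1; rw [e2] at h2
      nlinarith [mul_nonneg (by linarith [h1.2, h2.1] : (0:ℝ) ≤ y i - x i - 2)
        (by linarith [h1.2, h2.1] : (0:ℝ) ≤ y i - x i + 2)]
    · have e1 : t v i = L + 2 := by simp [ht, hvb]
      have e2 : t w i = 0 := by simp [ht, hwb]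
      rw [e1] at h1; rw [e2] at h2
      nlinarith [mul_nonneg (by linarith [h2.2, h1.1] : (0:ℝ) ≤ x i - y i - 2)
        (by linarith [h2.2, h1.1] : (0:ℝ) ≤ x i - y i + 2)]
    · exact absurd (hvb.trans hwb.symm) hi
  have hcard : ∑ v : Fin n → Bool, A.toFun n (box n (t v) L)
      = 2 ^ n * A.toFun n (box n (fun _ => 0) L) := by
    rw [Finset.sum_congr rfl fun v _ => A_box_translate A (t v) L, Finset.sum_const,
      Finset.card_univ, nsmul_eq_mul]
    congr 1
    rw [Fintype.card_fun]
    push_cast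
    simp
  have hstep : A.toFun n (box n (fun _ => 0) (2 * L))
      ≤ A.toFun n (⋃ v ∈ (Finset.univ : Finset (Fin n → Bool)), box n (t v) L) := by
    refine A.lipschitz n n _ _ (isBounded_box _ _) (measurableSet_box _ _) hub hum
      ⟨fun x => toE n (fun i => if x i ≤ L then x i else x i + 2), ?_, ?_⟩
    · intro x hx
      simp only [Set.mem_iUnion, Finset.mem_coe, Finset.mem_univ, exists_prop, true_and]
      refine ⟨fun i => decide (¬ x i ≤ L), fun i => ?_⟩
      have hxi := hx i
      simp only [Set.mem_Icc, zero_add] at hxi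
      simp only [Set.mem_Icc, toE_apply]
      by_cases hle : x i ≤ L
      · have hv : t (fun j => decide (¬ x j ≤ L)) i = 0 := by simp [ht, hle]
        rw [hv, if_pos hle, zero_add]
        exact ⟨hxi.1, hle⟩
      · have hv : t (fun j => decide (¬ x j ≤ L)) i = L + 2 := by simp [ht, hle]
        rw [hv, if_neg hle]
        have hgt : L < x i := not_le.mp hle
        constructor <;> linarith [hxi.2]
    · intro x _ y _
      apply dist_le_dist_of_sq
      intro i
      simp only [toE_apply]
      by_cases h1 : x i ≤ L
      · by_cases h2 : y i ≤ L
        · rw [if_pos h1, if_pos h2]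
        · rw [if_pos h1, if_neg h2]
          push_neg at h2
          nlinarith
      · by_cases h2 : y i ≤ L
        · rw [if_neg h1, if_pos h2]
          push_neg at h1
          nlinarith
        · rw [if_neg h1, if_neg h2]
          have he : x i + 2 - (y i + 2) = x i - y i := by ring
          rw [he]
  calc A.toFun n (box n (fun _ => 0) (2 * L))
      ≤ A.toFun n (⋃ v ∈ (Finset.univ : Finset (Fin n → Bool)), box n (t v) L) := hstep
    _ = ∑ v : Fin n → Bool, A.toFun n (box n (t v) L) := hsum
    _ = 2 ^ n * A.toFun n (box n (fun _ => 0) L) := hcard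

lemma A_grid (k : ℕ) (hk : 1 ≤ k) :
    ((1 + 2 ^ (k - 1) : ℝ)) ^ n ≤ A.toFun n (box n (fun _ => 0) (2 ^ k)) := by
  classical
  set N : ℕ := 2 ^ (k - 1) with hN
  set p : (Fin n → Fin (N + 1)) → E n := fun m => toE n (fun i => 2 * (m i : ℝ)) with hp
  have hk1 : k - 1 + 1 = k := by omega
  have h2k : (2:ℝ) ^ k = 2 * (N : ℝ) := by
    rw [hN]
    push_cast
    rw [← pow_succ', hk1]
  have hGb : IsBounded (⋃ m ∈ (Finset.univ : Finset (Fin n → Fin (N + 1))),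
      ({p m} : Set (E n))) :=
    (Bornology.isBounded_biUnion (Finset.univ).finite_toSet).2
      fun _ _ => Bornology.isBounded_singleton
  have hGm : MeasurableSet (⋃ m ∈ (Finset.univ : Finset (Fin n → Fin (N + 1))),
      ({p m} : Set (E n))) :=
    MeasurableSet.biUnion (Finset.univ).countable_toSet
      fun _ _ => measurableSet_singleton _
  have hA : A.toFun n (⋃ m ∈ (Finset.univ : Finset (Fin n → Fin (N + 1))),
      ({p m} : Set (E n))) = (((N + 1) ^ n : ℕ) : ℝ) := by
    rw [A_biUnion A Finset.univ _ (fun _ => Bornology.isBounded_singleton)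
      (fun _ => measurableSet_singleton _) ?_]
    · rw [Finset.sum_congr rfl fun m _ => A_singleton A (p m), Finset.sum_const,
        Finset.card_univ, nsmul_eq_mul, mul_one, Fintype.card_fun]
      simp
    · intro m _ m' _ hmm x hx y hy
      rw [Set.mem_singleton_iff] at hx hy
      subst hx; subst hy
      obtain ⟨i, hi⟩ : ∃ i, m i ≠ m' i := by
        by_contra h; push_neg at h; exact hmm (funext h)
      apply two_le_dist _ _ i
      have hne : (m i : ℕ) ≠ (m' i : ℕ) := fun h => hi (Fin.val_injective h)
      have happ : p m i - p m' i = 2 * (m i : ℝ) - 2 * (m' i : ℝ) := rfl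
      rw [happ]
      rcases lt_or_gt_of_ne hne with h | h
      · have h' : ((m i : ℕ) : ℝ) + 1 ≤ ((m' i : ℕ) : ℝ) := by exact_mod_cast h
        nlinarith
      · have h' : ((m' i : ℕ) : ℝ) + 1 ≤ ((m i : ℕ) : ℝ) := by exact_mod_cast h
        nlinarith
  have hsub : (⋃ m ∈ (Finset.univ : Finset (Fin n → Fin (N + 1))), ({p m} : Set (E n)))
      ⊆ box n (fun _ => 0) (2 ^ k) := by
    refine Set.iUnion₂_subset fun m _ => ?_
    intro x hx
    rw [Set.mem_singleton_iff] at hx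
    subst hx
    intro i
    simp only [Set.mem_Icc, zero_add, hp, toE_apply]
    have h1 : (m i : ℕ) ≤ N := Nat.lt_succ_iff.mp (m i).isLt
    have h2 : ((m i : ℕ) : ℝ) ≤ (N : ℝ) := by exact_mod_cast h1
    have h3 : (0:ℝ) ≤ ((m i : ℕ) : ℝ) := Nat.cast_nonneg _
    constructor
    · linarith
    · rw [h2k]; linarith
  have hmono := A_mono A _ _ hGb hGm (isBounded_box _ _) (measurableSet_box _ _) hsub
  have hcast : ((1 + 2 ^ (k - 1) : ℝ)) ^ n = (((N + 1) ^ n : ℕ) : ℝ) := by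
    rw [hN]; push_cast; ring
  rw [hcast, ← hA]
  exact hmono

end PBFAux

/-- The sequence `k ↦ A(2^k·[0,1]^n)/2^{kn}` is weakly decreasing,
satisfies `A(2^k·[0,1]^n) ≥ (1 + 2^{k-1})^n` for `k ≥ 1` (hence is bounded below by
`2^{-n}` for `k ≥ 1`), and converges to a positive limit `δ_{A,n} ≥ 2^{-n}`. -/
theorem pbfDensity_exists (A : PackingBoundFunction) (n : ℕ) (hn : 1 ≤ n) :
    Antitone (fun k : ℕ => A.toFun n ((2 : ℝ) ^ k • unitCube n) / 2 ^ (k * n)) ∧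
    (∀ k : ℕ, 1 ≤ k →
      ((1 + 2 ^ (k - 1) : ℝ)) ^ n ≤ A.toFun n ((2 : ℝ) ^ k • unitCube n)) ∧
    (∀ k : ℕ, 1 ≤ k →
      ((2 : ℝ) ^ n)⁻¹ ≤ A.toFun n ((2 : ℝ) ^ k • unitCube n) / 2 ^ (k * n)) ∧
    Filter.Tendsto (fun k : ℕ => A.toFun n ((2 : ℝ) ^ k • unitCube n) / 2 ^ (k * n))
      Filter.atTop (nhds (pbfDensity A n)) ∧
    ((2 : ℝ) ^ n)⁻¹ ≤ pbfDensity A n ∧ 0 < pbfDensity A n := by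
  classical
  have hQ : ∀ k : ℕ, (2:ℝ) ^ k • unitCube n = PBFAux.box n (fun _ => 0) (2 ^ k) :=
    fun k => PBFAux.smul_unitCube _ (by positivity)
  set f : ℕ → ℝ := fun k : ℕ => A.toFun n ((2 : ℝ) ^ k • unitCube n) / 2 ^ (k * n) with hf
  have hpos : ∀ m : ℕ, (0:ℝ) < 2 ^ m := fun m => by positivity
  have hanti : Antitone f := by
    apply antitone_nat_of_succ_le
    intro k
    have hdb := PBFAux.A_double A (n := n) (L := 2 ^ k) (by positivity)
    have h2 : (2:ℝ) * 2 ^ k = 2 ^ (k + 1) := by rw [pow_succ]; ring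
    rw [h2] at hdb
    simp only [hf, hQ]
    rw [div_le_div_iff₀ (hpos _) (hpos _)]
    have hexp : (2:ℝ) ^ ((k + 1) * n) = 2 ^ (k * n) * 2 ^ n := by
      rw [show (k + 1) * n = k * n + n from by ring, pow_add]
    rw [hexp]
    calc A.toFun n (PBFAux.box n (fun _ => 0) (2 ^ (k + 1))) * 2 ^ (k * n)
        ≤ (2 ^ n * A.toFun n (PBFAux.box n (fun _ => 0) (2 ^ k))) * 2 ^ (k * n) :=
          mul_le_mul_of_nonneg_right hdb (le_of_lt (hpos _))
      _ = A.toFun n (PBFAux.box n (fun _ => 0) (2 ^ k)) * (2 ^ (k * n) * 2 ^ n) := by ring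
  have hlow : ∀ k : ℕ, 1 ≤ k →
      ((1 + 2 ^ (k - 1) : ℝ)) ^ n ≤ A.toFun n ((2 : ℝ) ^ k • unitCube n) := by
    intro k hk
    rw [hQ]
    exact PBFAux.A_grid A k hk
  have hlow2 : ∀ k : ℕ, 1 ≤ k → ((2 : ℝ) ^ n)⁻¹ ≤ f k := by
    intro k hk
    simp only [hf]
    rw [le_div_iff₀ (hpos _)]
    have hexp : k * n = (k - 1) * n + n := by
      have h1 : k - 1 + 1 = k := by omega
      calc k * n = (k - 1 + 1) * n := by rw [h1]
        _ = (k - 1) * n + n := by ring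
    rw [hexp]
    have heq : ((2:ℝ) ^ n)⁻¹ * 2 ^ ((k - 1) * n + n) = 2 ^ ((k - 1) * n) := by
      rw [pow_add]
      field_simp
    rw [heq]
    calc (2:ℝ) ^ ((k - 1) * n) = (2 ^ (k - 1)) ^ n := by rw [pow_mul]
      _ ≤ (1 + 2 ^ (k - 1)) ^ n := by
          apply pow_le_pow_left₀ (by positivity)
          linarith
      _ ≤ A.toFun n ((2 : ℝ) ^ k • unitCube n) := hlow k hk
  have hbdd : BddBelow (Set.range f) := by
    refine ⟨0, ?_⟩
    rintro _ ⟨k, rfl⟩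
    apply div_nonneg _ (le_of_lt (hpos _))
    exact A.nonneg n _ (by rw [hQ]; exact PBFAux.isBounded_box _ _)
      (by rw [hQ]; exact PBFAux.measurableSet_box _ _)
  have htend : Tendsto f atTop (nhds (⨅ k, f k)) := tendsto_atTop_ciInf hanti hbdd
  have hd : pbfDensity A n = Filter.limsup f Filter.atTop := by rw [hf]; rfl
  have htend' : Tendsto f atTop (nhds (pbfDensity A n)) := by
    rw [hd, htend.limsup_eq]
    exact htend
  have hδ : ((2 : ℝ) ^ n)⁻¹ ≤ pbfDensity A n :=
    ge_of_tendsto htend' (Filter.eventually_atTop.mpr ⟨1, hlow2⟩)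
  exact ⟨hanti, hlow, hlow2, htend', hδ, lt_of_lt_of_le (by positivity) hδ⟩
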